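/- Let 0 < p < 1/2, p̄ = 1 - p, Q(y | w) = p̄ if y = w else p, and q(w | n) the posterior weights with ratio (p̄/p)^n. Let η : ℤ → [0,1] be finitely supported with Σₙ η(n) = 1, and suppose p/p̄ ≤ (Σₙ η(n) q(1|n)) / (Σₙ η(n) q(-1|n)) ≤ p̄/p. Then for every y ∈ {-1, 1}: Σ_{w ∈ {-1,1}} Σₙ Q(y | w) η(n) q(w | n) · ([w = y] - [w = -y]) ≥ 0, where [·] denotes the indicator (1 if true, 0 otherwise). -/

import Mathlib

/-- Truth-telling constraint under the revealing strategy: if the public belief `η` lies in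
the learning set, the expected gain of truthfully reporting `y` versus misreporting `-y`
is nonnegative. -/
theorem truth_telling_learning_set (p : ℝ) (hp : 0 < p) (hp' : p < 1/2)
    (Q : ℤ → ℤ → ℝ) (hQ : ∀ y w, Q y w = if y = w then (1 - p) else p)
    (q : ℤ → ℤ → ℝ)
    (hq1 : ∀ n : ℤ, q 1 n = ((1 - p)/p) ^ n / (((1 - p)/p) ^ n + 1))
    (hq2 : ∀ n : ℤ, q (-1) n = 1 / (((1 - p)/p) ^ n + 1))
    (η : ℤ →₀ ℝ) (hη0 : ∀ n, 0 ≤ η n) (hη1 : ∀ n, η n ≤ 1)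
    (hηsum : ∑ n ∈ η.support, η n = 1)
    (hL1 : p/(1 - p) ≤ (∑ n ∈ η.support, η n * q 1 n) / (∑ n ∈ η.support, η n * q (-1) n))
    (hL2 : (∑ n ∈ η.support, η n * q 1 n) / (∑ n ∈ η.support, η n * q (-1) n) ≤ (1 - p)/p)
    (y : ℤ) (hy : y = 1 ∨ y = -1) :
    0 ≤ ∑ w ∈ ({-1, 1} : Finset ℤ), ∑ n ∈ η.support,
        Q y w * η n * q w n *
          ((if w = y then (1:ℝ) else 0) - (if w = -y then (1:ℝ) else 0)) := by
  have hp1 : (0:ℝ) < 1 - p := by linarith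
  set A := ∑ n ∈ η.support, η n * q 1 n with hA
  set B := ∑ n ∈ η.support, η n * q (-1) n with hB
  have hrpos : ∀ n : ℤ, 0 < ((1 - p)/p) ^ n := fun n =>
    zpow_pos (div_pos hp1 hp) n
  have hqpos : ∀ n : ℤ, 0 < q (-1) n := by
    intro n
    rw [hq2]
    positivity
  have hq1nn : ∀ n : ℤ, 0 ≤ q 1 n := by
    intro n
    rw [hq1]
    positivity
  have hBpos : 0 < B := by
    apply Finset.sum_pos' (fun n hn => mul_nonneg (hη0 n) (hqpos n).le)
    obtain ⟨n, hn⟩ := Finset.nonempty_of_sum_ne_zero (hηsum ▸ one_ne_zero)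
    exact ⟨n, hn, mul_pos ((hη0 n).lt_of_ne' (Finsupp.mem_support_iff.mp hn)) (hqpos n)⟩
  have h1 : p * B ≤ A * (1 - p) := (div_le_div_iff₀ hp1 hBpos).mp hL1
  have h2 : A * p ≤ (1 - p) * B := (div_le_div_iff₀ hBpos hp).mp hL2
  rw [Finset.sum_pair (by norm_num : (-1:ℤ) ≠ 1)]
  rcases hy with rfl | rfl
  · have e1 : ∑ n ∈ η.support, Q 1 (-1) * η n * q (-1) n *
        ((if (-1:ℤ) = 1 then (1:ℝ) else 0) - (if (-1:ℤ) = -1 then (1:ℝ) else 0)) = -(p * B) := by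
      rw [hB, Finset.mul_sum, ← Finset.sum_neg_distrib]
      apply Finset.sum_congr rfl
      intro n _
      rw [hQ]
      norm_num; ring
    have e2 : ∑ n ∈ η.support, Q 1 1 * η n * q 1 n *
        ((if (1:ℤ) = 1 then (1:ℝ) else 0) - (if (1:ℤ) = -1 then (1:ℝ) else 0)) = A * (1 - p) := by
      rw [hA, Finset.sum_mul]
      apply Finset.sum_congr rfl
      intro n _
      rw [hQ]
      norm_num; ring
    rw [e1, e2]; linarith
  · have e1 : ∑ n ∈ η.support, Q (-1) (-1) * η n * q (-1) n *
        ((if (-1:ℤ) = -1 then (1:ℝ) else 0) - (if (-1:ℤ) = -(-1) then (1:ℝ) else 0)) = (1 - p) * B := by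
      rw [hB, Finset.mul_sum]
      apply Finset.sum_congr rfl
      intro n _
      rw [hQ]
      norm_num; ring
    have e2 : ∑ n ∈ η.support, Q (-1) 1 * η n * q 1 n *
        ((if (1:ℤ) = -1 then (1:ℝ) else 0) - (if (1:ℤ) = -(-1) then (1:ℝ) else 0)) = -(A * p) := by
      rw [hA, Finset.sum_mul, ← Finset.sum_neg_distrib]
      apply Finset.sum_congr rfl
      intro n _
      rw [hQ]
      norm_num; ring
    rw [e1, e2]; linarith
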